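/- Let A₀, A₁, B₀, B₁ be self-adjoint unitaries on a finite-dimensional Hilbert space with [Aᵢ,Bⱼ] = 0, and let |ψ⟩ be a unit vector with ⟨ψ|(A₀B₀ + A₀B₁ + A₁B₀ − A₁B₁)|ψ⟩ = 2√2. Then (A₀A₁ + A₁A₀)|ψ⟩ = 0 and (B₀B₁ + B₁B₀)|ψ⟩ = 0. -/
import Mathlib


open scoped InnerProductSpace

theorem stmt_11 {H : Type*} [NormedAddCommGroup H] [InnerProductSpace ℂ H]
    [FiniteDimensional ℂ H] [CompleteSpace H]
    (A₀ A₁ B₀ B₁ : H →L[ℂ] H)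
    (hA₀s : IsSelfAdjoint A₀) (hA₁s : IsSelfAdjoint A₁)
    (hB₀s : IsSelfAdjoint B₀) (hB₁s : IsSelfAdjoint B₁)
    (hA₀ : A₀ * A₀ = 1) (hA₁ : A₁ * A₁ = 1) (hB₀ : B₀ * B₀ = 1) (hB₁ : B₁ * B₁ = 1)
    (h₀₀ : Commute A₀ B₀) (h₀₁ : Commute A₀ B₁) (h₁₀ : Commute A₁ B₀) (h₁₁ : Commute A₁ B₁)
    (ψ : H) (hψ : ‖ψ‖ = 1)
    (hopt : ⟪ψ, ((A₀ * B₀ + A₀ * B₁ + A₁ * B₀ - A₁ * B₁) ψ)⟫_ℂ = (2 * Real.sqrt 2 : ℝ)) :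
    (A₀ * A₁ + A₁ * A₀) ψ = 0 ∧ (B₀ * B₁ + B₁ * B₀) ψ = 0 := by
  set c : ℂ := ((Real.sqrt 2 : ℝ) : ℂ) with hc
  have hc2 : c * c = 2 := by
    rw [hc, ← Complex.ofReal_mul, Real.mul_self_sqrt (by norm_num)]; norm_num
  set P : H →L[ℂ] H := A₀ + A₁ - c • B₀ with hP
  set Q : H →L[ℂ] H := A₀ - A₁ - c • B₁ with hQ
  have hstar : (starRingEnd ℂ) c = c := by rw [hc, Complex.conj_ofReal]
  have hPs : IsSelfAdjoint P := by
    rw [hP, IsSelfAdjoint, star_sub, star_add, star_smul, hA₀s.star_eq, hA₁s.star_eq,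
      hB₀s.star_eq, Complex.star_def, hstar]
  have hQs : IsSelfAdjoint Q := by
    rw [hQ, IsSelfAdjoint, star_sub, star_sub, star_smul, hA₀s.star_eq, hA₁s.star_eq,
      hB₁s.star_eq, Complex.star_def, hstar]
  -- SOS identity
  have key : P * P + Q * Q
      = (8:ℂ) • (1 : H →L[ℂ] H) - (2*c) • (A₀ * B₀ + A₀ * B₁ + A₁ * B₀ - A₁ * B₁) := by
    rw [hP, hQ]
    simp only [add_mul, sub_mul, mul_add, mul_sub, smul_mul_assoc, mul_smul_comm, smul_smul,
      hc2, hA₀, hA₁, hB₀, hB₁, ← h₀₀.eq, ← h₀₁.eq, ← h₁₀.eq, ← h₁₁.eq]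
    match_scalars <;>
      first
        | ring1
        | linear_combination (2:ℂ) * hc2

  have hPnorm : ⟪ψ, (P * P) ψ⟫_ℂ = ((‖P ψ‖^2 : ℝ) : ℂ) := by
    rw [ContinuousLinearMap.mul_apply]
    nth_rewrite 1 [← hPs.adjoint_eq]
    rw [ContinuousLinearMap.adjoint_inner_right, inner_self_eq_norm_sq_to_K]
    norm_cast
  have hQnorm : ⟪ψ, (Q * Q) ψ⟫_ℂ = ((‖Q ψ‖^2 : ℝ) : ℂ) := by
    rw [ContinuousLinearMap.mul_apply]
    nth_rewrite 1 [← hQs.adjoint_eq]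
    rw [ContinuousLinearMap.adjoint_inner_right, inner_self_eq_norm_sq_to_K]
    norm_cast
  have hRHS : ⟪ψ, ((8:ℂ) • (1 : H →L[ℂ] H)
      - (2*c) • (A₀ * B₀ + A₀ * B₁ + A₁ * B₀ - A₁ * B₁)) ψ⟫_ℂ = 0 := by
    rw [ContinuousLinearMap.sub_apply, inner_sub_right, ContinuousLinearMap.smul_apply,
      inner_smul_right, ContinuousLinearMap.smul_apply, inner_smul_right,
      ContinuousLinearMap.one_apply, inner_self_eq_norm_sq_to_K, hψ, hopt]
    have h2c : ((2 * Real.sqrt 2 : ℝ) : ℂ) = 2 * c := by push_cast [hc]; ring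
    rw [h2c]
    push_cast
    linear_combination (-4 : ℂ) * hc2
  have hsum : ((‖P ψ‖^2 : ℝ) : ℂ) + ((‖Q ψ‖^2 : ℝ) : ℂ) = 0 := by
    rw [← hPnorm, ← hQnorm, ← inner_add_right, ← ContinuousLinearMap.add_apply, key, hRHS]
  have hsumR : ‖P ψ‖^2 + ‖Q ψ‖^2 = 0 := by exact_mod_cast hsum
  have hPψ : P ψ = 0 := by
    have : ‖P ψ‖ = 0 := by nlinarith [sq_nonneg ‖P ψ‖, sq_nonneg ‖Q ψ‖, norm_nonneg (P ψ), norm_nonneg (Q ψ)]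
    exact norm_eq_zero.mp this
  have hQψ : Q ψ = 0 := by
    have : ‖Q ψ‖ = 0 := by nlinarith [sq_nonneg ‖P ψ‖, sq_nonneg ‖Q ψ‖, norm_nonneg (P ψ), norm_nonneg (Q ψ)]
    exact norm_eq_zero.mp this
  have hB0ψ : c • B₀ ψ = A₀ ψ + A₁ ψ := by
    have h := hPψ
    rw [hP] at h
    simp only [ContinuousLinearMap.sub_apply, ContinuousLinearMap.add_apply,
      ContinuousLinearMap.smul_apply, sub_eq_zero] at h
    exact h.symm
  have hB1ψ : c • B₁ ψ = A₀ ψ - A₁ ψ := by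
    have h := hQψ
    rw [hQ] at h
    simp only [ContinuousLinearMap.sub_apply, ContinuousLinearMap.smul_apply, sub_eq_zero] at h
    exact h.symm
  -- pointwise helpers
  have ap : ∀ (T S : H →L[ℂ] H), T * S = 1 → ∀ y, T (S y) = y := by
    intro T S hTS y
    have := congrArg (fun R : H →L[ℂ] H => R y) hTS
    simpa using this
  have cm : ∀ (T S : H →L[ℂ] H), Commute T S → ∀ y, T (S y) = S (T y) := by
    intro T S hTS y
    have := congrArg (fun R : H →L[ℂ] H => R y) hTS.eq
    simpa using this
  constructor
  · -- A anticommutation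
    have key1 : A₀ (A₀ ψ + A₁ ψ) + A₁ (A₀ ψ + A₁ ψ) = (2:ℂ) • ψ := by
      calc A₀ (A₀ ψ + A₁ ψ) + A₁ (A₀ ψ + A₁ ψ)
          = A₀ (c • B₀ ψ) + A₁ (c • B₀ ψ) := by rw [hB0ψ]
        _ = c • (A₀ (B₀ ψ)) + c • (A₁ (B₀ ψ)) := by simp [map_smul]
        _ = c • (B₀ (A₀ ψ)) + c • (B₀ (A₁ ψ)) := by rw [cm A₀ B₀ h₀₀ ψ, cm A₁ B₀ h₁₀ ψ]
        _ = c • (B₀ (A₀ ψ + A₁ ψ)) := by rw [map_add, smul_add]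
        _ = c • (B₀ (c • B₀ ψ)) := by rw [hB0ψ]
        _ = (c*c) • (B₀ (B₀ ψ)) := by rw [map_smul, smul_smul]
        _ = (2:ℂ) • ψ := by rw [hc2, ap B₀ B₀ hB₀ ψ]
    have h2 : ψ + A₀ (A₁ ψ) + (A₁ (A₀ ψ) + ψ) = (2:ℂ) • ψ := by
      rw [← key1, map_add, map_add, ap A₀ A₀ hA₀ ψ, ap A₁ A₁ hA₁ ψ]
    simp only [ContinuousLinearMap.add_apply, ContinuousLinearMap.mul_apply]
    have h3 : A₀ (A₁ ψ) + A₁ (A₀ ψ) + (ψ + ψ) = 0 + (ψ + ψ) := by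
      rw [zero_add]
      calc A₀ (A₁ ψ) + A₁ (A₀ ψ) + (ψ + ψ)
          = ψ + A₀ (A₁ ψ) + (A₁ (A₀ ψ) + ψ) := by abel
        _ = (2:ℂ) • ψ := h2
        _ = ψ + ψ := two_smul ℂ ψ
    exact add_right_cancel h3
  · -- B anticommutation
    have k2 : (2:ℂ) • (B₀ (B₁ ψ)) = A₀ (A₀ ψ + A₁ ψ) - A₁ (A₀ ψ + A₁ ψ) := by
      calc (2:ℂ) • (B₀ (B₁ ψ)) = (c*c) • (B₀ (B₁ ψ)) := by rw [hc2]
        _ = c • (B₀ (c • B₁ ψ)) := by rw [map_smul, smul_smul]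
        _ = c • (B₀ (A₀ ψ - A₁ ψ)) := by rw [hB1ψ]
        _ = c • (B₀ (A₀ ψ)) - c • (B₀ (A₁ ψ)) := by rw [map_sub, smul_sub]
        _ = c • (A₀ (B₀ ψ)) - c • (A₁ (B₀ ψ)) := by rw [cm A₀ B₀ h₀₀ ψ, cm A₁ B₀ h₁₀ ψ]
        _ = A₀ (c • B₀ ψ) - A₁ (c • B₀ ψ) := by simp [map_smul]
        _ = A₀ (A₀ ψ + A₁ ψ) - A₁ (A₀ ψ + A₁ ψ) := by rw [hB0ψ]
    have k3 : (2:ℂ) • (B₁ (B₀ ψ)) = A₀ (A₀ ψ - A₁ ψ) + A₁ (A₀ ψ - A₁ ψ) := by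
      calc (2:ℂ) • (B₁ (B₀ ψ)) = (c*c) • (B₁ (B₀ ψ)) := by rw [hc2]
        _ = c • (B₁ (c • B₀ ψ)) := by rw [map_smul, smul_smul]
        _ = c • (B₁ (A₀ ψ + A₁ ψ)) := by rw [hB0ψ]
        _ = c • (B₁ (A₀ ψ)) + c • (B₁ (A₁ ψ)) := by rw [map_add, smul_add]
        _ = c • (A₀ (B₁ ψ)) + c • (A₁ (B₁ ψ)) := by rw [cm A₀ B₁ h₀₁ ψ, cm A₁ B₁ h₁₁ ψ]
        _ = A₀ (c • B₁ ψ) + A₁ (c • B₁ ψ) := by simp [map_smul]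
        _ = A₀ (A₀ ψ - A₁ ψ) + A₁ (A₀ ψ - A₁ ψ) := by rw [hB1ψ]
    have ksum : (2:ℂ) • (B₀ (B₁ ψ) + B₁ (B₀ ψ)) = 0 := by
      rw [smul_add, k2, k3, map_add, map_add, map_sub, map_sub,
        ap A₀ A₀ hA₀ ψ, ap A₁ A₁ hA₁ ψ]
      abel
    simp only [ContinuousLinearMap.add_apply, ContinuousLinearMap.mul_apply]
    have := (smul_eq_zero.mp ksum).resolve_left (by norm_num)
    exact this
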